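/- Let U be a Clifford operator on N qubits, t and t' natural numbers with t ≡ t' (mod 2), and G a linear operator on (ℂ²)^⊗N with U G U† = G. Define L = Σ_P γ_P(G)^{t'} P^⊗t, where the sum is over unsigned Pauli operators P and γ_P(G) = tr(G P)/2^N. Then U^⊗t L U†^⊗t = L. -/

import Mathlib

open Matrix MeasureTheory

/-- Basis index for `N` qubits. -/
abbrev QubitIdx (N : ℕ) := Fin N → Fin 2

/-- Linear operators on the Hilbert space `(ℂ²)^⊗N`, as matrices. -/
abbrev Op (N : ℕ) := Matrix (QubitIdx N) (QubitIdx N) ℂ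

/-- The single-qubit Pauli matrices I, X, Y, Z. -/
noncomputable def σ1 : Fin 4 → Matrix (Fin 2) (Fin 2) ℂ
  | 0 => 1
  | 1 => !![0, 1; 1, 0]
  | 2 => !![0, -Complex.I; Complex.I, 0]
  | 3 => !![1, 0; 0, -1]

/-- The unsigned Pauli operator on `N` qubits indexed by `a : Fin N → Fin 4`
(the Kronecker product of the single-qubit Paulis `σ1 (a k)`). -/
noncomputable def pauli {N : ℕ} (a : Fin N → Fin 4) : Op N :=
  Matrix.of fun i j => ∏ k, σ1 (a k) (i k) (j k)

/-- The phase factors `{±1, ±i}`. -/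
def phases : Set ℂ := {1, -1, Complex.I, -Complex.I}

/-- The Pauli group on `N` qubits: phased unsigned Paulis. -/
def PauliGroup (N : ℕ) : Set (Op N) :=
  {P | ∃ c ∈ phases, ∃ a : Fin N → Fin 4, P = c • pauli a}

/-- A Clifford operator: a unitary whose conjugation action preserves the Pauli group. -/
def IsClifford {N : ℕ} (U : Op N) : Prop :=
  U ∈ Matrix.unitaryGroup (QubitIdx N) ℂ ∧
    ∀ P ∈ PauliGroup N, U * P * Uᴴ ∈ PauliGroup N

/-- The `G`-symmetric unitary group `U_{N,G}`: unitaries commuting with every element of `G`. -/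
def UnitarySym (N : ℕ) (G : Set (Op N)) : Set (Op N) :=
  {U | U ∈ Matrix.unitaryGroup (QubitIdx N) ℂ ∧ ∀ g ∈ G, U * g = g * U}

/-- The `G`-symmetric Clifford group `C_{N,G}`. -/
def CliffordSym (N : ℕ) (G : Set (Op N)) : Set (Op N) :=
  {U | IsClifford U ∧ U ∈ UnitarySym N G}

/-- `G` is a subgroup of the unitary group on `N` qubits. -/
def IsUnitarySubgroup {N : ℕ} (G : Set (Op N)) : Prop :=
  (∀ g ∈ G, g ∈ Matrix.unitaryGroup (QubitIdx N) ℂ) ∧ (1 : Op N) ∈ G ∧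
    (∀ g ∈ G, ∀ h ∈ G, g * h ∈ G) ∧ (∀ g ∈ G, gᴴ ∈ G)

/-- Operators on the `t`-fold tensor power `H^⊗t` of the `N`-qubit Hilbert space. -/
abbrev BigOp (N t : ℕ) := Matrix (Fin t → QubitIdx N) (Fin t → QubitIdx N) ℂ

/-- The `t`-fold tensor (Kronecker) power `A^⊗t` of an operator `A`. -/
noncomputable def tpow {N : ℕ} (t : ℕ) (A : Op N) : BigOp N t :=
  Matrix.of fun i j => ∏ s, A (i s) (j s)

noncomputable instance OpMeasurableSpace {N : ℕ} : MeasurableSpace (Op N) := borel (Op N)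

/-- The `t`-fold twirling channel `Φ_{t,μ}(L) = ∫ U^⊗t L (U^⊗t)† dμ(U)`, defined entrywise. -/
noncomputable def twirl {N : ℕ} (t : ℕ) (μ : Measure (Op N)) (L : BigOp N t) : BigOp N t :=
  Matrix.of fun i j => ∫ U, (tpow t U * L * (tpow t U)ᴴ) i j ∂μ

/-- The Kronecker power `A^⊗N` of a single-qubit operator, as an operator on `N` qubits. -/
noncomputable def kronPow {N : ℕ} (A : Matrix (Fin 2) (Fin 2) ℂ) : Op N :=
  Matrix.of fun i j => ∏ k, A (i k) (j k)

/-- The single-qubit unitary `e^{iθZ}`. -/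
noncomputable def expZ (θ : ℝ) : Matrix (Fin 2) (Fin 2) ℂ :=
  !![Complex.exp ((θ : ℂ) * Complex.I), 0; 0, Complex.exp (-(θ : ℂ) * Complex.I)]

/-- The permutation operator `V_σ` on the threefold tensor power `H^⊗3`. -/
noncomputable def permOp {N : ℕ} (σ : Equiv.Perm (Fin 3)) : BigOp N 3 :=
  Matrix.of fun i j => if i = j ∘ ⇑σ⁻¹ then 1 else 0

/-- The tensor product `G₁ ⊗ G₂ ⊗ G₃` as an operator on `H^⊗3`. -/
noncomputable def tprod3 {N : ℕ} (G₁ G₂ G₃ : Op N) : BigOp N 3 :=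
  Matrix.of fun i j => G₁ (i 0) (j 0) * G₂ (i 1) (j 1) * G₃ (i 2) (j 2)


section Helpers

lemma piMat_mul {ι κ : Type*} [Fintype ι] [DecidableEq ι] [Fintype κ] [DecidableEq κ]
    (A B : ι → Matrix κ κ ℂ) :
    (Matrix.of fun i j : ι → κ => ∏ k, A k (i k) (j k)) *
      (Matrix.of fun i j : ι → κ => ∏ k, B k (i k) (j k)) =
    Matrix.of fun i j => ∏ k, (A k * B k) (i k) (j k) := by
  ext i j
  simp only [Matrix.mul_apply, Matrix.of_apply]
  rw [← Fintype.piFinset_univ]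
  conv_rhs => rw [Finset.prod_univ_sum]
  exact Finset.sum_congr rfl fun x _ => (Finset.prod_mul_distrib).symm

lemma piMat_trace {ι κ : Type*} [Fintype ι] [DecidableEq ι] [Fintype κ]
    (M : ι → Matrix κ κ ℂ) :
    Matrix.trace (Matrix.of fun i j : ι → κ => ∏ k, M k (i k) (j k)) =
      ∏ k, Matrix.trace (M k) := by
  simp only [Matrix.trace, Matrix.diag, Matrix.of_apply]
  rw [← Fintype.piFinset_univ]
  conv_rhs => rw [Finset.prod_univ_sum]

lemma sigma_herm (m : Fin 4) : (σ1 m)ᴴ = σ1 m := by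
  fin_cases m <;> simp [σ1] <;>
    ext i j <;> fin_cases i <;> fin_cases j <;>
      simp [Matrix.conjTranspose_apply]

lemma trace_sigma_mul (m n : Fin 4) :
    Matrix.trace (σ1 m * σ1 n) = if m = n then 2 else 0 := by
  fin_cases m <;> fin_cases n <;>
    simp [σ1, Matrix.trace, Matrix.mul_apply, Fin.sum_univ_two, Matrix.one_apply] <;> ring_nf

lemma pauli_mul {N : ℕ} (a b : Fin N → Fin 4) :
    pauli a * pauli b = Matrix.of fun i j => ∏ k, (σ1 (a k) * σ1 (b k)) (i k) (j k) :=
  piMat_mul _ _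

lemma trace_pauli_mul {N : ℕ} (a b : Fin N → Fin 4) :
    Matrix.trace (pauli a * pauli b) = if a = b then (2 ^ N : ℂ) else 0 := by
  rw [pauli_mul, piMat_trace]
  simp only [trace_sigma_mul]
  by_cases h : a = b
  · simp [h]
  · obtain ⟨k, hk⟩ := Function.ne_iff.mp h
    rw [if_neg h]
    exact Finset.prod_eq_zero (Finset.mem_univ k) (by simp [hk])

lemma pauli_herm {N : ℕ} (a : Fin N → Fin 4) : (pauli a)ᴴ = pauli a := by
  ext i j
  simp only [Matrix.conjTranspose_apply, pauli, Matrix.of_apply, star_prod]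
  exact Finset.prod_congr rfl fun k _ => by
    rw [← Matrix.conjTranspose_apply, sigma_herm]

lemma pauli_ne_zero {N : ℕ} (a : Fin N → Fin 4) : pauli a ≠ 0 := by
  intro h
  have h2 := trace_pauli_mul a a
  simp only [h, mul_zero, Matrix.trace_zero, if_pos rfl] at h2
  exact pow_ne_zero N (two_ne_zero) h2.symm

lemma tpow_mul {N t : ℕ} (A B : Op N) : tpow t (A * B) = tpow t A * tpow t B :=
  (piMat_mul (fun _ => A) (fun _ => B)).symm

lemma tpow_conjT {N t : ℕ} (A : Op N) : (tpow t A)ᴴ = tpow t Aᴴ := by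
  ext i j
  simp only [Matrix.conjTranspose_apply, tpow, Matrix.of_apply, star_prod]

lemma tpow_smul {N t : ℕ} (c : ℂ) (A : Op N) : tpow t (c • A) = c ^ t • tpow t A := by
  ext i j
  simp [tpow, Finset.prod_mul_distrib, Matrix.smul_apply, smul_eq_mul]

lemma pow_eq_pow_of_sq_one {c : ℂ} (hc : c ^ 2 = 1) {t t' : ℕ} (h : t % 2 = t' % 2) :
    c ^ t = c ^ t' := by
  have key : ∀ s : ℕ, c ^ s = c ^ (s % 2) := fun s => by
    conv_lhs => rw [← Nat.mod_add_div s 2]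
    rw [pow_add, pow_mul, hc, one_pow, mul_one]
  rw [key t, key t', h]

end Helpers

/-- for a Clifford `U` fixing `G` under conjugation, the operator
`L = Σ_P γ_P(G)^{t'} P^⊗t` (with `t ≡ t'` mod 2) is invariant under `U^⊗t` conjugation. -/
theorem stmt5 {N : ℕ} (U : Op N) (hU : IsClifford U)
    (t t' : ℕ) (htt : t % 2 = t' % 2)
    (G : Op N) (hG : U * G * Uᴴ = G) :
    tpow t U *
        (∑ a : Fin N → Fin 4,
          (Matrix.trace (G * pauli a) / (2 ^ N : ℂ)) ^ t' • tpow t (pauli a)) *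
        (tpow t U)ᴴ =
      ∑ a : Fin N → Fin 4,
        (Matrix.trace (G * pauli a) / (2 ^ N : ℂ)) ^ t' • tpow t (pauli a) := by
  obtain ⟨hUu, hCl⟩ := hU
  have hUU : Uᴴ * U = 1 := by
    have := hUu.1
    rwa [Matrix.star_eq_conjTranspose] at this
  choose c hc b hb using fun a : Fin N → Fin 4 =>
    hCl (pauli a) ⟨1, by simp [phases], a, (one_smul ℂ (pauli a)).symm⟩
  -- the signs are real (±1)
  have hreal : ∀ a, star (c a) = c a := by
    intro a
    have herm : (U * pauli a * Uᴴ)ᴴ = U * pauli a * Uᴴ := by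
      simp only [Matrix.conjTranspose_mul, Matrix.conjTranspose_conjTranspose,
        pauli_herm, mul_assoc]
    rw [hb a, Matrix.conjTranspose_smul, pauli_herm] at herm
    have h0 : (star (c a) - c a) • pauli (b a) = 0 := by
      rw [sub_smul, herm, sub_self]
    rcases smul_eq_zero.mp h0 with h | h
    · exact sub_eq_zero.mp h
    · exact absurd h (pauli_ne_zero _)
  have hsq : ∀ a, c a ^ 2 = 1 := by
    intro a
    have hm := hc a
    simp only [phases, Set.mem_insert_iff, Set.mem_singleton_iff] at hm
    rcases hm with h | h | h | h
    · rw [h]; norm_num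
    · rw [h]; norm_num
    · exfalso
      have := hreal a
      rw [h] at this
      simp [Complex.ext_iff] at this
      norm_num at this
    · exfalso
      have := hreal a
      rw [h] at this
      simp [Complex.ext_iff] at this
      norm_num at this
  have hc0 : ∀ a, c a ≠ 0 := by
    intro a h
    have := hsq a
    rw [h] at this
    simp at this
  -- cancellation of conjugation by U
  have conjcancel : ∀ Z : Op N, Uᴴ * (U * Z * Uᴴ) * U = Z := by
    intro Z
    simp only [← mul_assoc]
    rw [hUU, one_mul, mul_assoc, hUU, mul_one]
  -- b is injective, hence bijective
  have hbinj : Function.Injective b := by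
    intro a1 a2 h12
    by_contra hne
    have e1 : U * (c a2 • pauli a1) * Uᴴ = U * (c a1 • pauli a2) * Uᴴ := by
      rw [mul_smul_comm, smul_mul_assoc, mul_smul_comm, smul_mul_assoc,
        hb a1, hb a2, h12, smul_smul, smul_smul, mul_comm]
    have e2 : c a2 • pauli a1 = c a1 • pauli a2 := by
      have h2 := congrArg (fun M => Uᴴ * M * U) e1
      rwa [conjcancel, conjcancel] at h2
    have e3 := congrArg (fun M => Matrix.trace (M * pauli a1)) e2
    rw [smul_mul_assoc, smul_mul_assoc, Matrix.trace_smul, Matrix.trace_smul,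
      trace_pauli_mul, trace_pauli_mul, if_pos rfl, if_neg (fun h => hne h.symm)] at e3
    simp only [smul_eq_mul, mul_zero] at e3
    exact (mul_ne_zero (hc0 a2) (pow_ne_zero N two_ne_zero)) e3
  have hbbij : Function.Bijective b := Finite.injective_iff_bijective.mp hbinj
  -- G commutes with U
  have hcomm : U * G = G * U := by
    have h1 : U * G * Uᴴ * U = G * U := by rw [hG]
    rwa [mul_assoc, hUU, mul_one] at h1
  -- the coefficient relation
  have hγrel : ∀ a, Matrix.trace (G * pauli (b a)) = c a * Matrix.trace (G * pauli a) := by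
    intro a
    have h1 : c a * Matrix.trace (G * pauli (b a)) = Matrix.trace (G * pauli a) := by
      have e : Matrix.trace (G * (c a • pauli (b a))) = Matrix.trace (G * pauli a) := by
        rw [← hb a]
        have e2 : G * (U * pauli a * Uᴴ) = U * (G * pauli a) * Uᴴ := by
          rw [show G * (U * pauli a * Uᴴ) = (G * U) * pauli a * Uᴴ by
            simp only [mul_assoc], ← hcomm]
          simp only [mul_assoc]
        rw [e2, Matrix.trace_mul_comm, ← mul_assoc, hUU, one_mul]
      rwa [mul_smul_comm, Matrix.trace_smul, smul_eq_mul] at e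
    calc Matrix.trace (G * pauli (b a))
        = (c a * c a) * Matrix.trace (G * pauli (b a)) := by
          rw [← sq, hsq a, one_mul]
      _ = c a * Matrix.trace (G * pauli a) := by rw [mul_assoc, h1]
  -- main computation
  rw [Finset.mul_sum, Finset.sum_mul,
    ← Equiv.sum_comp (Equiv.ofBijective b hbbij)
      (fun a => (Matrix.trace (G * pauli a) / (2 ^ N : ℂ)) ^ t' • tpow t (pauli a))]
  refine Finset.sum_congr rfl fun a _ => ?_
  simp only [Equiv.ofBijective_apply]
  rw [mul_smul_comm, smul_mul_assoc, tpow_conjT, ← tpow_mul, ← tpow_mul, hb a,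
    tpow_smul, smul_smul, hγrel a, mul_div_assoc, mul_pow,
    pow_eq_pow_of_sq_one (hsq a) htt, mul_comm]
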